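/- Let G and H be connected graphs, both of even order, each having at least one vertex of odd degree. Then the co-even domination number of the join G + H equals |O_V(G)| + |O_V(H)|, where O_V(G) and O_V(H) denote the sets of odd-degree vertices of G and H respectively. -/
import Mathlib


open SimpleGraph

/-- `D` is a dominating set of `G`. -/
def IsDomSet {V : Type*} (G : SimpleGraph V) (D : Set V) : Prop :=
  ∀ v ∉ D, ∃ u ∈ D, G.Adj u v

/-- `D` is a co-even dominating set of `G`: a dominating set such that
every vertex outside `D` has even degree. -/
def IsCoEvenDomSet {V : Type*} (G : SimpleGraph V) (D : Set V) : Prop :=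
  IsDomSet G D ∧ ∀ v ∉ D, Even (G.neighborSet v).ncard

/-- The domination number. -/
noncomputable def gammaD {V : Type*} (G : SimpleGraph V) : ℕ :=
  sInf {n | ∃ D : Set V, IsDomSet G D ∧ D.ncard = n}

/-- The co-even domination number. -/
noncomputable def gammaCoe {V : Type*} (G : SimpleGraph V) : ℕ :=
  sInf {n | ∃ D : Set V, IsCoEvenDomSet G D ∧ D.ncard = n}

/-- The set of vertices of odd degree. -/
def oddVerts {V : Type*} (G : SimpleGraph V) : Set V :=
  {v | Odd (G.neighborSet v).ncard}

/-- The set of vertices of even degree. -/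
def evenVerts {V : Type*} (G : SimpleGraph V) : Set V :=
  {v | Even (G.neighborSet v).ncard}

/-- The join `G + H` of two graphs. -/
def joinG {V W : Type*} (G : SimpleGraph V) (H : SimpleGraph W) : SimpleGraph (V ⊕ W) :=
  SimpleGraph.fromRel (fun a b =>
    match a, b with
    | Sum.inl u, Sum.inl v => G.Adj u v
    | Sum.inr u, Sum.inr v => H.Adj u v
    | _, _ => True)

/-- The corona `G ∘ H`: one copy of `G` and `|V(G)|` copies of `H`,
joining the `i`-th vertex of `G` to every vertex of the `i`-th copy of `H`. -/
def corona {V W : Type*} (G : SimpleGraph V) (H : SimpleGraph W) : SimpleGraph (V ⊕ V × W) :=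
  SimpleGraph.fromRel (fun a b =>
    match a, b with
    | Sum.inl u, Sum.inl v => G.Adj u v
    | Sum.inr u, Sum.inr v => u.1 = v.1 ∧ H.Adj u.2 v.2
    | Sum.inl u, Sum.inr v => u = v.1
    | Sum.inr _, Sum.inl _ => False)

/-- The neighbourhood corona `G ⋆ H`: one copy of `G` and `|V(G)|` copies of `H`,
joining every neighbour of the `i`-th vertex of `G` to every vertex of the
`i`-th copy of `H`. -/
def ncorona {V W : Type*} (G : SimpleGraph V) (H : SimpleGraph W) : SimpleGraph (V ⊕ V × W) :=
  SimpleGraph.fromRel (fun a b =>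
    match a, b with
    | Sum.inl u, Sum.inl v => G.Adj u v
    | Sum.inr u, Sum.inr v => u.1 = v.1 ∧ H.Adj u.2 v.2
    | Sum.inl u, Sum.inr v => G.Adj u v.1
    | Sum.inr _, Sum.inl _ => False)

/-- The Hajós sum `G₁(x₁y₁) +_H G₂(x₂y₂)`: delete edges `x₁y₁` and `x₂y₂`,
identify `x₁` with `x₂` (represented here by `Sum.inr x₂`), and add the edge `y₁y₂`. -/
def hajos {V₁ V₂ : Type*} (G₁ : SimpleGraph V₁) (G₂ : SimpleGraph V₂)
    (x₁ y₁ : V₁) (x₂ y₂ : V₂) : SimpleGraph ({v : V₁ // v ≠ x₁} ⊕ V₂) :=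
  SimpleGraph.fromRel (fun a b =>
    match a, b with
    | Sum.inl u, Sum.inl v => G₁.Adj u.1 v.1
    | Sum.inr u, Sum.inr v => G₂.Adj u v ∧ ¬(u = x₂ ∧ v = y₂) ∧ ¬(u = y₂ ∧ v = x₂)
    | Sum.inl u, Sum.inr v => (v = x₂ ∧ G₁.Adj x₁ u.1 ∧ u.1 ≠ y₁) ∨ (u.1 = y₁ ∧ v = y₂)
    | Sum.inr _, Sum.inl _ => False)

section AuxJoin
variable {V W : Type*} (G : SimpleGraph V) (H : SimpleGraph W)

lemma adj_ll (u v : V) : (joinG G H).Adj (Sum.inl u) (Sum.inl v) ↔ G.Adj u v := by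
  simp [joinG, SimpleGraph.fromRel_adj, G.adj_comm u v]
  intro h; exact h.ne'

lemma adj_lr (u : V) (w : W) : (joinG G H).Adj (Sum.inl u) (Sum.inr w) := by
  simp [joinG, SimpleGraph.fromRel_adj]

lemma adj_rr (u v : W) : (joinG G H).Adj (Sum.inr u) (Sum.inr v) ↔ H.Adj u v := by
  simp [joinG, SimpleGraph.fromRel_adj, H.adj_comm u v]
  intro h; exact h.ne'

lemma nbhd_inl (v : V) :
    (joinG G H).neighborSet (Sum.inl v) = Sum.inl '' (G.neighborSet v) ∪ Set.range Sum.inr := by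
  ext x
  cases x with
  | inl u => simp [SimpleGraph.mem_neighborSet, adj_ll, G.adj_comm]
  | inr w => simp [SimpleGraph.mem_neighborSet, adj_lr]

lemma nbhd_inr (w : W) :
    (joinG G H).neighborSet (Sum.inr w) = Sum.inr '' (H.neighborSet w) ∪ Set.range Sum.inl := by
  ext x
  cases x with
  | inl u => simp [SimpleGraph.mem_neighborSet, (joinG G H).adj_comm, adj_lr]
  | inr u => simp [SimpleGraph.mem_neighborSet, adj_rr, H.adj_comm]

lemma card_nbhd_inl [Fintype V] [Fintype W] (v : V) :
    ((joinG G H).neighborSet (Sum.inl v)).ncard = (G.neighborSet v).ncard + Fintype.card W := by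
  rw [nbhd_inl, Set.ncard_union_eq (by simp [Set.disjoint_left]) (Set.toFinite _) (Set.toFinite _),
    Set.ncard_image_of_injective _ Sum.inl_injective, ← Set.image_univ,
    Set.ncard_image_of_injective _ Sum.inr_injective, Set.ncard_univ, Nat.card_eq_fintype_card]

lemma card_nbhd_inr [Fintype V] [Fintype W] (w : W) :
    ((joinG G H).neighborSet (Sum.inr w)).ncard = (H.neighborSet w).ncard + Fintype.card V := by
  rw [nbhd_inr, Set.ncard_union_eq (by simp [Set.disjoint_left]) (Set.toFinite _) (Set.toFinite _),
    Set.ncard_image_of_injective _ Sum.inr_injective, ← Set.image_univ,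
    Set.ncard_image_of_injective _ Sum.inl_injective, Set.ncard_univ, Nat.card_eq_fintype_card]

lemma oddVerts_join [Fintype V] [Fintype W]
    (hV : Even (Fintype.card V)) (hW : Even (Fintype.card W)) :
    oddVerts (joinG G H) = Sum.inl '' oddVerts G ∪ Sum.inr '' oddVerts H := by
  ext x
  cases x with
  | inl v => simp [oddVerts, card_nbhd_inl, Nat.odd_add, hW]
  | inr w => simp [oddVerts, card_nbhd_inr, Nat.odd_add, hV]

end AuxJoin

theorem stmt5 {V W : Type*} [Fintype V] [Fintype W]
    (G : SimpleGraph V) (H : SimpleGraph W)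
    (hG : G.Connected) (hH : H.Connected)
    (hV : Even (Fintype.card V)) (hW : Even (Fintype.card W))
    (hOG : ∃ v, Odd (G.neighborSet v).ncard)
    (hOH : ∃ w, Odd (H.neighborSet w).ncard) :
    gammaCoe (joinG G H) = (oddVerts G).ncard + (oddVerts H).ncard := by
  classical
  set D₀ : Set (V ⊕ W) := Sum.inl '' oddVerts G ∪ Sum.inr '' oddVerts H with hD₀
  have hodd : oddVerts (joinG G H) = D₀ := oddVerts_join G H hV hW
  have hcard : D₀.ncard = (oddVerts G).ncard + (oddVerts H).ncard := by
    rw [hD₀, Set.ncard_union_eq (by simp [Set.disjoint_left]) (Set.toFinite _) (Set.toFinite _),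
      Set.ncard_image_of_injective _ Sum.inl_injective,
      Set.ncard_image_of_injective _ Sum.inr_injective]
  have hmem : IsCoEvenDomSet (joinG G H) D₀ := by
    constructor
    · intro x _
      cases x with
      | inl v =>
        obtain ⟨w, hw⟩ := hOH
        exact ⟨Sum.inr w, Or.inr ⟨w, hw, rfl⟩, ((joinG G H).adj_comm _ _).1 (adj_lr G H v w)⟩
      | inr w =>
        obtain ⟨v, hv⟩ := hOG
        exact ⟨Sum.inl v, Or.inl ⟨v, hv, rfl⟩, adj_lr G H v w⟩
    · intro x hx
      rw [← hodd] at hx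
      simpa [oddVerts, Nat.not_odd_iff_even] using hx
  have hsub : ∀ D : Set (V ⊕ W), IsCoEvenDomSet (joinG G H) D → D₀ ⊆ D := by
    intro D hD x hx
    by_contra hxD
    rw [← hodd] at hx
    exact (Nat.not_odd_iff_even.2 (hD.2 x hxD)) hx
  have hm : ((oddVerts G).ncard + (oddVerts H).ncard) ∈
      {n | ∃ D : Set (V ⊕ W), IsCoEvenDomSet (joinG G H) D ∧ D.ncard = n} :=
    ⟨D₀, hmem, hcard⟩
  unfold gammaCoe
  apply le_antisymm
  · exact Nat.sInf_le hm
  · apply le_csInf ⟨_, hm⟩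
    rintro n ⟨D, hD, rfl⟩
    rw [← hcard]
    exact Set.ncard_le_ncard (hsub D hD) (Set.toFinite _)
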